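/- Let d ≥ 2, t > 0 and x ∈ ℝ^d₊. Then ∫_{ℝ^d₊} |(∇_x + ∇_y) H(x,y,t)| dy = (πt)^{−1/2} e^{−x_d²/(4t)}, where (∇_x + ∇_y)H denotes the vector with components (∂_{x_i} + ∂_{y_i})H, i = 1,…,d. -/

import Mathlib

open MeasureTheory Real Set

/-- One-dimensional Gaussian heat kernel `G_t(ξ) = (4πt)^{−1/2} e^{−ξ²/(4t)}`. -/
noncomputable def G1 (t ξ : ℝ) : ℝ := (4 * π * t) ^ (-(1 : ℝ) / 2) * Real.exp (-ξ ^ 2 / (4 * t))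

/-- `(d−1)`-dimensional Gaussian heat kernel (here `d = n+2`, so `d−1 = n+1`):
`G_t^{(d−1)}(v) = (4πt)^{−(d−1)/2} e^{−|v|²/(4t)}`. -/
noncomputable def Gtan (n : ℕ) (t : ℝ) (v : Fin (n + 1) → ℝ) : ℝ :=
  (4 * π * t) ^ (-((n : ℝ) + 1) / 2) * Real.exp (-(∑ i, (v i) ^ 2) / (4 * t))

/-- Half-space Dirichlet heat kernel in dimension `d = n+2`:
`H(x,y,t) = G_t^{(d−1)}(x'−y') (G_t(x_d−y_d) − G_t(x_d+y_d))`. -/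
noncomputable def H (n : ℕ) (t : ℝ) (x y : Fin (n + 2) → ℝ) : ℝ :=
  Gtan n t (fun i => x i.castSucc - y i.castSucc) *
    (G1 t (x (Fin.last (n + 1)) - y (Fin.last (n + 1))) -
      G1 t (x (Fin.last (n + 1)) + y (Fin.last (n + 1))))

/-- Component `i` of the vector `(∇_x + ∇_y) H(x,y,t)`. -/
noncomputable def D1 (n : ℕ) (t : ℝ) (i : Fin (n + 2)) (x y : Fin (n + 2) → ℝ) : ℝ :=
  deriv (fun s => H n t (Function.update x i s) y) (x i) +
    deriv (fun s => H n t x (Function.update y i s)) (y i)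

lemma G1_pos {t : ℝ} (ht : 0 < t) (ξ : ℝ) : 0 < G1 t ξ := by
  unfold G1
  have : (0:ℝ) < 4 * π * t := by positivity
  positivity

lemma Gtan_pos (n : ℕ) {t : ℝ} (ht : 0 < t) (v : Fin (n+1) → ℝ) : 0 < Gtan n t v := by
  unfold Gtan
  have : (0:ℝ) < 4 * π * t := by positivity
  positivity

lemma hasDerivAt_G1 {t : ℝ} (ht : 0 < t) (ξ : ℝ) :
    HasDerivAt (G1 t) (-(ξ / (2 * t)) * G1 t ξ) ξ := by
  have h1 : HasDerivAt (fun ξ : ℝ => -ξ ^ 2 / (4 * t)) (-(2 * ξ) / (4 * t)) ξ := by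
    have := ((hasDerivAt_pow 2 ξ).neg).div_const (4 * t)
    simpa using this
  have h2 := (h1.exp).const_mul ((4 * π * t) ^ (-(1:ℝ)/2))
  have ht' : (t:ℝ) ≠ 0 := ht.ne'
  refine h2.congr_deriv ?_
  unfold G1
  field_simp
  ring

lemma D1_castSucc (n : ℕ) (t : ℝ) (x y : Fin (n+2) → ℝ) (j : Fin (n+1)) :
    D1 n t j.castSucc x y = 0 := by
  set w : Fin (n+1) → ℝ := fun k => x k.castSucc - y k.castSucc with hw
  set K : ℝ := G1 t (x (Fin.last (n+1)) - y (Fin.last (n+1))) -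
      G1 t (x (Fin.last (n+1)) + y (Fin.last (n+1))) with hK
  set φ : ℝ → ℝ := fun a => Gtan n t (Function.update w j a) * K with hφ
  have h1 : (fun s => H n t (Function.update x j.castSucc s) y)
      = fun s => φ (s - y j.castSucc) := by
    funext s
    unfold H
    rw [hφ]
    have e1 : (fun k : Fin (n+1) => Function.update x j.castSucc s k.castSucc - y k.castSucc)
        = Function.update w j (s - y j.castSucc) := by
      funext k
      by_cases hk : k = j
      · subst hk; simp
      · rw [Function.update_of_ne hk, Function.update_of_ne (by simpa [Fin.castSucc_inj] using hk)]
    rw [e1, Function.update_of_ne (Fin.castSucc_lt_last j).ne']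
  have h2 : (fun s => H n t x (Function.update y j.castSucc s))
      = fun s => φ (x j.castSucc - s) := by
    funext s
    unfold H
    rw [hφ]
    have e1 : (fun k : Fin (n+1) => x k.castSucc - Function.update y j.castSucc s k.castSucc)
        = Function.update w j (x j.castSucc - s) := by
      funext k
      by_cases hk : k = j
      · subst hk; simp
      · rw [Function.update_of_ne hk, Function.update_of_ne (by simpa [Fin.castSucc_inj] using hk)]
    rw [e1, Function.update_of_ne (Fin.castSucc_lt_last j).ne']
  unfold D1
  rw [h1, h2, deriv_comp_sub_const, deriv_comp_const_sub]
  ring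

lemma D1_last (n : ℕ) {t : ℝ} (ht : 0 < t) (x y : Fin (n+2) → ℝ) :
    D1 n t (Fin.last (n+1)) x y =
      Gtan n t (fun k => x k.castSucc - y k.castSucc) *
        ((x (Fin.last (n+1)) + y (Fin.last (n+1))) / t *
          G1 t (x (Fin.last (n+1)) + y (Fin.last (n+1)))) := by
  set d := Fin.last (n+1) with hd
  set C := Gtan n t (fun k => x k.castSucc - y k.castSucc) with hC
  set xd := x d
  set yd := y d
  have harg : ∀ s : ℝ, (fun k : Fin (n+1) =>
      Function.update x d s k.castSucc - y k.castSucc)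
      = fun k => x k.castSucc - y k.castSucc := by
    intro s; funext k; rw [Function.update_of_ne (Fin.castSucc_lt_last k).ne]
  have harg' : ∀ s : ℝ, (fun k : Fin (n+1) =>
      x k.castSucc - Function.update y d s k.castSucc)
      = fun k => x k.castSucc - y k.castSucc := by
    intro s; funext k; rw [Function.update_of_ne (Fin.castSucc_lt_last k).ne]
  have h1 : (fun s => H n t (Function.update x d s) y)
      = fun s => C * (G1 t (s - yd) - G1 t (s + yd)) := by
    funext s; unfold H; rw [harg s, Function.update_self]
  have h2 : (fun s => H n t x (Function.update y d s))
      = fun s => C * (G1 t (xd - s) - G1 t (xd + s)) := by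
    funext s; unfold H; rw [harg' s, Function.update_self]
  have hg1 : ∀ (a p : ℝ), HasDerivAt (fun s : ℝ => G1 t (s + a))
      (-((p + a) / (2*t)) * G1 t (p + a)) p := by
    intro a p
    have := (hasDerivAt_G1 ht (p + a)).comp p ((hasDerivAt_id p).add_const a)
    simpa [Function.comp_def] using this
  have hg2 : ∀ (a p : ℝ), HasDerivAt (fun s : ℝ => G1 t (s - a))
      (-((p - a) / (2*t)) * G1 t (p - a)) p := by
    intro a p
    have := (hasDerivAt_G1 ht (p - a)).comp p ((hasDerivAt_id p).sub_const a)
    simpa [Function.comp_def] using this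
  have hg3 : ∀ (a p : ℝ), HasDerivAt (fun s : ℝ => G1 t (a - s))
      (((a - p) / (2*t)) * G1 t (a - p)) p := by
    intro a p
    have := (hasDerivAt_G1 ht (a - p)).comp p ((hasDerivAt_id p).neg.const_add a)
    refine this.congr_deriv ?_
    ring
  have hg4 : ∀ (a p : ℝ), HasDerivAt (fun s : ℝ => G1 t (a + s))
      (-((a + p) / (2*t)) * G1 t (a + p)) p := by
    intro a p
    have := (hasDerivAt_G1 ht (a + p)).comp p ((hasDerivAt_id p).const_add a)
    simpa [Function.comp_def] using this
  have hd1 : HasDerivAt (fun s => C * (G1 t (s - yd) - G1 t (s + yd)))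
      (C * ((-((xd - yd) / (2*t)) * G1 t (xd - yd)) -
        (-((xd + yd) / (2*t)) * G1 t (xd + yd)))) xd :=
    (((hg2 yd xd).sub (hg1 yd xd))).const_mul C
  have hd2 : HasDerivAt (fun s => C * (G1 t (xd - s) - G1 t (xd + s)))
      (C * ((((xd - yd) / (2*t)) * G1 t (xd - yd)) -
        (-((xd + yd) / (2*t)) * G1 t (xd + yd)))) yd :=
    (((hg3 xd yd).sub (hg4 xd yd))).const_mul C
  unfold D1
  rw [h1, h2, hd1.deriv, hd2.deriv]
  have ht' : (t:ℝ) ≠ 0 := ht.ne'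
  field_simp
  ring

lemma integral_gtan (n : ℕ) {t : ℝ} (ht : 0 < t) (a : Fin (n+1) → ℝ) :
    ∫ v : Fin (n+1) → ℝ, Gtan n t (fun j => a j - v j) = 1 := by
  have h4 : (0:ℝ) < 4 * π * t := by positivity
  have hrw : ∀ v : Fin (n+1) → ℝ, Gtan n t (fun j => a j - v j)
      = (4*π*t) ^ (-((n:ℝ)+1)/2) * ∏ j, Real.exp (-(a j - v j)^2 / (4*t)) := by
    intro v
    unfold Gtan
    rw [← Real.exp_sum]
    congr 1
    simp only [neg_div, Finset.sum_neg_distrib, ← Finset.sum_div]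
  simp_rw [hrw]
  rw [integral_const_mul,
    integral_fintype_prod_volume_eq_prod (ι := Fin (n+1))
      (f := fun j (u : ℝ) => Real.exp (-(a j - u)^2 / (4*t)))]
  have h1 : ∀ j : Fin (n+1), (∫ u : ℝ, Real.exp (-(a j - u)^2 / (4*t)))
      = Real.sqrt (4*π*t) := by
    intro j
    rw [integral_sub_left_eq_self (fun u : ℝ => Real.exp (-u^2 / (4*t))) volume (a j)]
    have : ∀ u : ℝ, -u^2 / (4*t) = -(4*t)⁻¹ * u^2 := fun u => by ring
    simp_rw [this]
    rw [integral_gaussian]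
    congr 1
    field_simp
  simp_rw [h1]
  rw [Finset.prod_const, Finset.card_univ, Fintype.card_fin]
  rw [Real.sqrt_eq_rpow, ← Real.rpow_natCast ((4*π*t) ^ ((1:ℝ)/2)) (n+1),
    ← Real.rpow_mul h4.le, ← Real.rpow_add h4]
  rw [show -((n:ℝ)+1)/2 + 1/2 * ((n:ℕ)+1 : ℕ) = 0 by push_cast; ring, Real.rpow_zero]

lemma integral_hfun {t : ℝ} (ht : 0 < t) {b : ℝ} (hb : 0 < b) :
    ∫ s in Ioi (0:ℝ), (b + s) / t * G1 t (b + s) = 2 * G1 t b := by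
  have hderiv : ∀ p ∈ Ici (0:ℝ), HasDerivAt (fun s : ℝ => -2 * G1 t (b + s))
      ((b + p) / t * G1 t (b + p)) p := by
    intro p _
    have h := ((hasDerivAt_G1 ht (b + p)).comp p ((hasDerivAt_id p).const_add b)).const_mul (-2 : ℝ)
    refine h.congr_deriv ?_
    have ht' : (t:ℝ) ≠ 0 := ht.ne'
    field_simp
  have hpos : ∀ p ∈ Ioi (0:ℝ), 0 ≤ (b + p) / t * G1 t (b + p) := by
    intro p hp
    have : (0:ℝ) < p := hp
    have := G1_pos ht (b + p)
    positivity
  have htend : Filter.Tendsto (fun s : ℝ => -2 * G1 t (b + s)) Filter.atTop (nhds 0) := by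
    have h1 : Filter.Tendsto (fun s : ℝ => -(b + s)^2 / (4*t)) Filter.atTop Filter.atBot := by
      apply Filter.Tendsto.atBot_div_const (by positivity)
      apply Filter.tendsto_neg_atBot_iff.mpr
      exact (Filter.tendsto_pow_atTop (two_ne_zero)).comp
        (Filter.tendsto_atTop_add_const_left _ b Filter.tendsto_id)
    have h2 : Filter.Tendsto (fun s : ℝ => G1 t (b + s)) Filter.atTop (nhds 0) := by
      have := (Real.tendsto_exp_atBot.comp h1).const_mul ((4*π*t) ^ (-(1:ℝ)/2))
      simpa [G1, Function.comp] using this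
    have := h2.const_mul (-2 : ℝ)
    simpa using this
  rw [integral_Ioi_of_hasDerivAt_of_nonneg' hderiv hpos htend]
  simp

/-- For `d = n+2 ≥ 2`, `t > 0` and `x` in the half space:
`∫_{ℝ^d₊} |(∇_x + ∇_y) H(x,y,t)| dy = (πt)^{−1/2} e^{−x_d²/(4t)}`. -/
theorem stmt_6 (n : ℕ) (t : ℝ) (ht : 0 < t) (x : Fin (n + 2) → ℝ)
    (hx : 0 < x (Fin.last (n + 1))) :
    (∫ y in {y : Fin (n + 2) → ℝ | 0 < y (Fin.last (n + 1))},
        Real.sqrt (∑ i, (D1 n t i x y) ^ 2)) =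
      (π * t) ^ (-(1 : ℝ) / 2) * Real.exp (-(x (Fin.last (n + 1))) ^ 2 / (4 * t)) := by
  set d := Fin.last (n+1) with hd
  set g : (Fin (n+1) → ℝ) → ℝ := fun v => Gtan n t (fun j => x j.castSucc - v j) with hg
  set hfun : ℝ → ℝ := fun s => (x d + s) / t * G1 t (x d + s) with hh
  have hmeas : MeasurableSet {y : Fin (n+2) → ℝ | 0 < y d} :=
    measurableSet_lt measurable_const (measurable_pi_apply d)
  have hcongr : (∫ y in {y : Fin (n+2) → ℝ | 0 < y d}, Real.sqrt (∑ i, (D1 n t i x y) ^ 2))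
      = ∫ y in {y : Fin (n+2) → ℝ | 0 < y d}, g (fun j => y j.castSucc) * hfun (y d) := by
    refine setIntegral_congr_fun hmeas fun y hy => ?_
    have hy' : 0 < y d := hy
    have hsum : (∑ i, (D1 n t i x y) ^ 2) = (D1 n t d x y) ^ 2 := by
      rw [Fin.sum_univ_castSucc]
      simp [D1_castSucc, hd]
    rw [hsum, Real.sqrt_sq (by
      rw [D1_last n ht x y]
      have := Gtan_pos n ht (fun k : Fin (n+1) => x k.castSucc - y k.castSucc)
      have := G1_pos ht (x d + y d)
      have : (0:ℝ) < x d + y d := by linarith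
      positivity)]
    rw [D1_last n ht x y]
  rw [hcongr]
  have hmp := volume_preserving_piFinSuccAbove (fun _ : Fin (n+2) => ℝ) d
  set e := MeasurableEquiv.piFinSuccAbove (fun _ : Fin (n+2) => ℝ) d with he
  have hset : {y : Fin (n+2) → ℝ | 0 < y d}
      = e ⁻¹' ((Ioi (0:ℝ)) ×ˢ (univ : Set (Fin (n+1) → ℝ))) := by
    ext y
    simp [e, MeasurableEquiv.piFinSuccAbove, Set.mem_prod, Fin.insertNthEquiv]
  have hfun_eq : ∀ y : Fin (n+2) → ℝ,
      g (fun j => y j.castSucc) * hfun (y d)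
        = (fun p : ℝ × (Fin (n+1) → ℝ) => hfun p.1 * g p.2) (e y) := by
    intro y
    show _ = hfun (e y).1 * g (e y).2
    have h1 : (e y).1 = y d := rfl
    have h2 : (e y).2 = fun j => y (d.succAbove j) := rfl
    rw [h1, h2]
    simp only [hd, Fin.succAbove_last]
    ring
  simp_rw [hfun_eq, hset]
  rw [hmp.setIntegral_preimage_emb (MeasurableEquiv.measurableEmbedding e)
    (fun p : ℝ × (Fin (n+1) → ℝ) => hfun p.1 * g p.2) _]
  rw [Measure.volume_eq_prod, ← Measure.prod_restrict, Measure.restrict_univ,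
    integral_prod_mul]
  rw [show (∫ s in Ioi (0:ℝ), hfun s) = 2 * G1 t (x d) from integral_hfun ht hx,
    show (∫ v, g v) = 1 from integral_gtan n ht (fun j => x j.castSucc)]
  rw [mul_one]
  unfold G1
  rw [show (4:ℝ) * π * t = 4 * (π * t) by ring,
    Real.mul_rpow (by norm_num) (by positivity)]
  rw [show ((4:ℝ)) ^ (-(1:ℝ)/2) = 1/2 by
    rw [show (4:ℝ) = 2 ^ (2:ℕ) by norm_num, ← Real.rpow_natCast, ← Real.rpow_mul (by norm_num)]
    norm_num]
  ring
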